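/- Given superconformal second-order transition data with dg¹²_{UV}/dx = 2ζ_{UV}ζ¹²_{UV}, suppose there exist even 0-cochains λ¹² with g¹²_{UV} = ζ²_{UV}λ¹²_U − λ¹²_V∘f_{UV} (the coboundary condition, using ∂f_{UV}/∂x = ζ²_{UV}). Then ζ¹²_{UV} = (1/2)ζ_{UV}(∂λ¹²_U/∂x − (∂λ¹²_V/∂y)∘f_{UV}) + (∂ζ_{UV}/∂x)λ¹²_U. Consequently, defining φ¹²_U := (1/2)∂λ¹²_U/∂x on each chart, the final splitting condition ζ¹²_{UV} = ζ_{UV}φ¹²_U − ζ_{UV}(φ¹²_V∘f_{UV}) + (∂ζ_{UV}/∂x)λ¹²_U is satisfied. -/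

import Mathlib

/-!
STATEMENT 15.  Charts `U` (coordinate `x`, an open set `s ⊆ ℂ`) and `V` (coordinate `y`,
an open set `t ⊆ ℂ`), with holomorphic change of coordinate `y = f x` satisfying
`f' = ζ²`.  All coefficient functions (`g12 = g¹²_{UV}`, `z = ζ_{UV}`, `z12 = ζ¹²_{UV}`,
`lamU = λ¹²_U`, `lamV = λ¹²_V`) are holomorphic.  Given the superconformal identity
`dg¹²_{UV}/dx = 2 ζ_{UV} ζ¹²_{UV}` and the coboundary condition
`g¹²_{UV} = ζ²_{UV} λ¹²_U − λ¹²_V ∘ f_{UV}`, we conclude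
`ζ¹²_{UV} = ½ ζ_{UV} (∂λ¹²_U/∂x − (∂λ¹²_V/∂y) ∘ f_{UV}) + (∂ζ_{UV}/∂x) λ¹²_U`,
and hence, with `φ¹²_U := ½ ∂λ¹²_U/∂x` on each chart, the final splitting condition
`ζ¹²_{UV} = ζ_{UV} φ¹²_U − ζ_{UV} (φ¹²_V ∘ f_{UV}) + (∂ζ_{UV}/∂x) λ¹²_U` holds. -/
theorem statement15 (s t : Set ℂ) (hs : IsOpen s) (ht : IsOpen t)
    (f z z12 g12 lamU lamV : ℂ → ℂ)
    (hmaps : Set.MapsTo f s t)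
    (hf : DifferentiableOn ℂ f s) (hz : DifferentiableOn ℂ z s)
    (hg12 : DifferentiableOn ℂ g12 s) (hlamU : DifferentiableOn ℂ lamU s)
    (hlamV : DifferentiableOn ℂ lamV t)
    (hzne : ∀ x ∈ s, z x ≠ 0)
    (hchain : ∀ x ∈ s, deriv f x = z x ^ 2)
    (hcobound : ∀ x ∈ s, g12 x = z x ^ 2 * lamU x - lamV (f x))
    (hsc : ∀ x ∈ s, deriv g12 x = 2 * z x * z12 x) :
    (∀ x ∈ s, z12 x =
      (1 / 2) * z x * (deriv lamU x - deriv lamV (f x)) + deriv z x * lamU x) ∧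
    (∀ x ∈ s, z12 x =
      z x * ((1 / 2) * deriv lamU x) - z x * ((1 / 2) * deriv lamV (f x))
        + deriv z x * lamU x) := by

  have main : ∀ x ∈ s, z12 x =
      (1 / 2) * z x * (deriv lamU x - deriv lamV (f x)) + deriv z x * lamU x := by
    intro x hx
    have hxs : s ∈ nhds x := hs.mem_nhds hx
    have hzx : HasDerivAt z (deriv z x) x :=
      ((hz x hx).differentiableAt hxs).hasDerivAt
    have hfx : HasDerivAt f (deriv f x) x :=
      ((hf x hx).differentiableAt hxs).hasDerivAt
    have hlUx : HasDerivAt lamU (deriv lamU x) x :=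
      ((hlamU x hx).differentiableAt hxs).hasDerivAt
    have hlVx : HasDerivAt lamV (deriv lamV (f x)) (f x) :=
      ((hlamV (f x) (hmaps hx)).differentiableAt (ht.mem_nhds (hmaps hx))).hasDerivAt
    have H : HasDerivAt (fun x => z x ^ 2 * lamU x - lamV (f x))
        ((2 * z x ^ 1 * deriv z x) * lamU x + z x ^ 2 * deriv lamU x
          - deriv lamV (f x) * deriv f x) x := by
      have h1 := ((hzx.pow 2).mul hlUx)
      have h2 := hlVx.comp x hfx
      exact (h1.sub h2).congr_deriv (by norm_num)
    have heq : g12 =ᶠ[nhds x] fun x => z x ^ 2 * lamU x - lamV (f x) :=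
      Filter.eventuallyEq_of_mem hxs hcobound
    have hd : deriv g12 x = (2 * z x ^ 1 * deriv z x) * lamU x + z x ^ 2 * deriv lamU x
          - deriv lamV (f x) * deriv f x := by
      rw [heq.deriv_eq, H.deriv]
    have key : 2 * z x * z12 x = (2 * z x ^ 1 * deriv z x) * lamU x
        + z x ^ 2 * deriv lamU x - deriv lamV (f x) * (z x ^ 2) := by
      rw [← hsc x hx, hd, hchain x hx]
    have hz0 : (2 : ℂ) * z x ≠ 0 := mul_ne_zero two_ne_zero (hzne x hx)
    apply mul_left_cancel₀ hz0
    rw [key]; ring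
  refine ⟨main, fun x hx => ?_⟩
  rw [main x hx]; ring
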